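/- arXiv:1908.01413 — 2 statements merged into one kernel-verified Lean document; each statement's English description precedes it below -/
import Mathlib

section
/- If a function b : ℝ^d → ℝ is λ-homogeneous with respect to two distinct points 0 and y (i.e. b(r x) = r^λ b(x) and b(y + r x) = r^λ b(y + x) for all x ∈ ℝ^d and r > 0), then b is invariant under translation by y, i.e. b(x + y) = b(x) for all x ∈ ℝ^d. -/
open Set

/-- If `b : ℝ^d → ℝ` is `λ`-homogeneous with respect to both `0` and `y`,
then `b` is invariant under translation by `y`. -/
theorem homogeneous_two_points_invariant
    (d : ℕ) (hd : 1 ≤ d) (lam : ℝ)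
    (b : EuclideanSpace ℝ (Fin d) → ℝ) (y : EuclideanSpace ℝ (Fin d))
    (h0 : ∀ x : EuclideanSpace ℝ (Fin d), ∀ r : ℝ, 0 < r →
      b (r • x) = r ^ lam * b x)
    (hy : ∀ x : EuclideanSpace ℝ (Fin d), ∀ r : ℝ, 0 < r →
      b (y + r • x) = r ^ lam * b (y + x)) :
    ∀ x : EuclideanSpace ℝ (Fin d), b (x + y) = b x := by
  intro x
  have h1 := hy (x - y) (1/2) (by norm_num)
  have h2 := h0 (x + y) (1/2) (by norm_num)
  have hv : y + (1/2 : ℝ) • (x - y) = (1/2 : ℝ) • (x + y) := by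
    module
  have hx : y + (x - y) = x := by abel
  rw [hv, h2, hx] at h1
  have hpos : (0:ℝ) < ((1:ℝ)/2) ^ lam := Real.rpow_pos_of_pos (by norm_num) lam
  exact mul_left_cancel₀ (ne_of_gt hpos) h1
end

section
/- Abstract splitting lemma: Let H be a Hilbert space of functions on ℝ^d and let N(u, x, r) be a quantity satisfying: (monotonicity) r ↦ N(u,x,r) nondecreasing; (scaling) N(u_{x,r}, y, s) = N(u, x + r y, s r) where u_{x,r}(z) = c(x,r) u(x + r z) for a normalizing constant c; (continuity) (u,x) ↦ N(u,x,r) continuous in strong topology for each fixed r; (rigidity) if N(u,x,r) = λ for all r > 0 then u is λ-homogeneous about x. Suppose b is a strong limit of a blow-up sequence u_{x₀, r_n} with N(u, x₀, 0) = λ, and suppose y₀ ∈ ℝ^d is such that there exist points y_n → y₀ with N(u_{x₀,r_n}, y_n, 0) = λ. Then N(b, y₀, r) = λ for all r > 0, and consequently b(x + y₀) = b(x) for all x. -/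
open Set Filter Topology

/-- Abstract splitting lemma. `H` is a topological space of "functions" on `ℝ^d`,
with evaluation `ev`, a fixed solution `U`, and blow-up rescalings `bl x r`
(representing `u_{x,r}`). `N` is an Almgren-type frequency satisfying monotonicity
in the radius, the scaling identity, joint strong continuity, and the rigidity
property (constant frequency `μ` implies `μ`-homogeneity). If `b` is a strong limit
of the blow-up sequence `bl x₀ rₙ`, `N(U, x₀, 0⁺) = λ`, and there are points
`yₙ → y₀` of frequency `λ` for `bl x₀ rₙ`, then `N(b, y₀, r) = λ` for every `r > 0`
and `b` is invariant under translation by `y₀`. -/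
theorem abstract_splitting_lemma
    {H : Type*} [TopologicalSpace H] (d : ℕ) (hd : 1 ≤ d) (lam : ℝ)
    (ev : H → EuclideanSpace ℝ (Fin d) → ℝ)
    (N : H → EuclideanSpace ℝ (Fin d) → ℝ → ℝ)
    (U : H) (bl : EuclideanSpace ℝ (Fin d) → ℝ → H)
    (hmono : ∀ (v : H) (x : EuclideanSpace ℝ (Fin d)), MonotoneOn (N v x) (Ioi (0 : ℝ)))
    (hscal : ∀ (x y : EuclideanSpace ℝ (Fin d)) (r s : ℝ), 0 < r → 0 < s →
      N (bl x r) y s = N U (x + r • y) (s * r))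
    (hcont : ∀ r : ℝ, 0 < r →
      Continuous (fun p : H × EuclideanSpace ℝ (Fin d) => N p.1 p.2 r))
    (hrigid : ∀ (v : H) (x : EuclideanSpace ℝ (Fin d)) (μ : ℝ),
      (∀ r : ℝ, 0 < r → N v x r = μ) →
      ∀ (z : EuclideanSpace ℝ (Fin d)) (ρ : ℝ), 0 < ρ →
        ev v (x + ρ • z) = ρ ^ μ * ev v (x + z))
    (x₀ y₀ : EuclideanSpace ℝ (Fin d))
    (hN0 : Tendsto (N U x₀) (𝓝[>] (0 : ℝ)) (𝓝 lam))
    (rn : ℕ → ℝ) (hrn : ∀ n, 0 < rn n) (hrn0 : Tendsto rn atTop (𝓝 0))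
    (b : H) (hb : Tendsto (fun n => bl x₀ (rn n)) atTop (𝓝 b))
    (yn : ℕ → EuclideanSpace ℝ (Fin d)) (hyn : Tendsto yn atTop (𝓝 y₀))
    (hfreq : ∀ n, Tendsto (N (bl x₀ (rn n)) (yn n)) (𝓝[>] (0 : ℝ)) (𝓝 lam)) :
    (∀ r : ℝ, 0 < r → N b y₀ r = lam) ∧
    (∀ x : EuclideanSpace ℝ (Fin d), ev b (x + y₀) = ev b x) := by
  -- limits of frequency along the blow-up sequence, at a fixed radius
  have hlim : ∀ r : ℝ, 0 < r →
      Tendsto (fun n => N (bl x₀ (rn n)) (yn n) r) atTop (𝓝 (N b y₀ r)) := by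
    intro r hr
    exact ((hcont r hr).tendsto (b, y₀)).comp (hb.prodMk_nhds hyn)
  -- each term is ≥ lam, by monotonicity and hfreq
  have hlow : ∀ (n : ℕ) (r : ℝ), 0 < r → lam ≤ N (bl x₀ (rn n)) (yn n) r := by
    intro n r hr
    refine le_of_tendsto (hfreq n) ?_
    filter_upwards [Ioo_mem_nhdsGT_of_mem (⟨le_refl 0, hr⟩ : (0:ℝ) ∈ Ico 0 r)] with s hs
    exact hmono _ _ hs.1 hr hs.2.le
  -- upper bound: N b y₀ r ≤ N U x₀ t for all t > 0
  have hupper : ∀ (r : ℝ), 0 < r → ∀ (t : ℝ), 0 < t → N b y₀ r ≤ N U x₀ t := by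
    intro r hr t ht
    have hr0 : (0:ℝ) < rn 0 := hrn 0
    set ρ := t / rn 0 with hρdef
    have hρ : 0 < ρ := div_pos ht hr0
    -- the comparison sequence
    have hpt : Tendsto (fun n => (rn n / rn 0) • yn n) atTop
        (𝓝 (0 : EuclideanSpace ℝ (Fin d))) := by
      have := (hrn0.div_const (rn 0)).smul hyn
      simpa using this
    have hRHS : Tendsto (fun n => N (bl x₀ (rn 0)) ((rn n / rn 0) • yn n) ρ) atTop
        (𝓝 (N (bl x₀ (rn 0)) 0 ρ)) :=
      ((hcont ρ hρ).tendsto (bl x₀ (rn 0), 0)).comp (tendsto_const_nhds.prodMk_nhds hpt)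
    have hval : N (bl x₀ (rn 0)) 0 ρ = N U x₀ t := by
      rw [hscal x₀ 0 (rn 0) ρ hr0 hρ]
      simp [hρdef, div_mul_cancel₀ _ hr0.ne']
    have hineq : ∀ᶠ n in atTop,
        N (bl x₀ (rn n)) (yn n) r ≤ N (bl x₀ (rn 0)) ((rn n / rn 0) • yn n) ρ := by
      have hev : ∀ᶠ n in atTop, r * rn n ≤ t := by
        have : Tendsto (fun n => r * rn n) atTop (𝓝 0) := by
          simpa using hrn0.const_mul r
        filter_upwards [this.eventually (ge_mem_nhds ht)] with n hn using hn
      filter_upwards [hev] with n hn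
      have h1 : N (bl x₀ (rn n)) (yn n) r = N U (x₀ + rn n • yn n) (r * rn n) :=
        hscal _ _ _ _ (hrn n) hr
      have h2 : N (bl x₀ (rn 0)) ((rn n / rn 0) • yn n) ρ
          = N U (x₀ + rn n • yn n) t := by
        rw [hscal _ _ _ _ hr0 hρ, smul_smul, mul_div_cancel₀ _ hr0.ne',
          hρdef, div_mul_cancel₀ _ hr0.ne']
      rw [h1, h2]
      exact hmono U _ (mul_pos hr (hrn n)) ht hn
    calc N b y₀ r ≤ N (bl x₀ (rn 0)) 0 ρ :=
          le_of_tendsto_of_tendsto (hlim r hr) hRHS hineq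
      _ = N U x₀ t := hval
  -- N b y₀ r = lam for all r > 0
  have hNy : ∀ r : ℝ, 0 < r → N b y₀ r = lam := by
    intro r hr
    have hle : N b y₀ r ≤ lam := by
      refine ge_of_tendsto hN0 ?_
      filter_upwards [self_mem_nhdsWithin] with t ht
      exact hupper r hr t ht
    have hge : lam ≤ N b y₀ r :=
      ge_of_tendsto (hlim r hr) (Eventually.of_forall fun n => hlow n r hr)
    exact le_antisymm hle hge
  -- N b 0 r = lam for all r > 0
  have hN0' : ∀ r : ℝ, 0 < r → N b 0 r = lam := by
    intro r hr
    have hlim0 : Tendsto (fun n => N (bl x₀ (rn n)) 0 r) atTop (𝓝 (N b 0 r)) :=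
      ((hcont r hr).tendsto (b, 0)).comp (hb.prodMk_nhds tendsto_const_nhds)
    have heq : ∀ n, N (bl x₀ (rn n)) 0 r = N U x₀ (r * rn n) := by
      intro n
      rw [hscal _ _ _ _ (hrn n) hr]; simp
    have hlam : Tendsto (fun n => N (bl x₀ (rn n)) 0 r) atTop (𝓝 lam) := by
      have h1 : Tendsto (fun n => r * rn n) atTop (𝓝[>] (0:ℝ)) := by
        refine tendsto_nhdsWithin_of_tendsto_nhds_of_eventually_within _
          (by simpa using hrn0.const_mul r) ?_
        exact Eventually.of_forall fun n => mul_pos hr (hrn n)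
      simpa [heq, Function.comp_def] using hN0.comp h1
    exact tendsto_nhds_unique hlim0 hlam
  refine ⟨hNy, ?_⟩
  -- homogeneity about y₀ and about 0
  have homy := hrigid b y₀ lam hNy
  have hom0 := hrigid b 0 lam hN0'
  intro x
  have h2 : (0:ℝ) < (1/2 : ℝ) := by norm_num
  have e1 : ev b (y₀ + (1/2 : ℝ) • (x - y₀)) = (1/2 : ℝ) ^ lam * ev b x := by
    have := homy (x - y₀) (1/2) h2
    simpa using this
  have e2 : ev b ((1/2 : ℝ) • (x + y₀)) = (1/2 : ℝ) ^ lam * ev b (x + y₀) := by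
    have := hom0 (x + y₀) (1/2) h2
    simpa using this
  have key : y₀ + (1/2 : ℝ) • (x - y₀) = (1/2 : ℝ) • (x + y₀) := by
    module
  have hne : ((1/2 : ℝ) ^ lam : ℝ) ≠ 0 :=
    (Real.rpow_pos_of_pos (by norm_num) lam).ne'
  have : (1/2 : ℝ) ^ lam * ev b x = (1/2 : ℝ) ^ lam * ev b (x + y₀) := by
    rw [← e1, ← e2, key]
  exact (mul_left_cancel₀ hne this).symm
end
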